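/- arXiv:dg-ga/9605001 — 2 statements merged into one kernel-verified Lean document; each statement's English description precedes it below -/
import Mathlib

section
/- Let Q be a linear map from polynomials in (q,p) to a unital associative ℂ-algebra satisfying Q({f,g}) = (i/ħ)[Q(f),Q(g)], Q(q²)=Q(q)², Q(p²)=Q(p)², and Q(qp)=½(Q(q)Q(p)+Q(p)Q(q)). If additionally every element commuting with both Q(q) and Q(p) is central (or in an irreducible setting, scalar), then Q(q³) = Q(q)³. -/
open MvPolynomial

/-- Canonical Poisson bracket on ℝ[q,p], `q = X 0`, `p = X 1`. -/
noncomputable def pb (f g : MvPolynomial (Fin 2) ℝ) : MvPolynomial (Fin 2) ℝ :=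
  pderiv 0 f * pderiv 1 g - pderiv 1 f * pderiv 0 g

/-- given the Dirac condition, the quadratic Von Neumann rules, and
that every element commuting with both `Q(q)` and `Q(p)` is central, one has
`Q(q³) = Q(q)³`. -/
theorem stmt_4 (hbar : ℝ) (hhbar : hbar ≠ 0) (A : Type) [Ring A] [Algebra ℝ A] [Algebra ℂ A]
    [IsScalarTower ℝ ℂ A]
    (Q : MvPolynomial (Fin 2) ℝ →ₗ[ℝ] A)
    (hbr : ∀ f g, Q (pb f g) = (Complex.I / (hbar:ℂ)) • (Q f * Q g - Q g * Q f))
    (hq2 : Q ((X 0)^2) = (Q (X 0))^2)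
    (hp2 : Q ((X 1)^2) = (Q (X 1))^2)
    (hqp : Q (X 0 * X 1) = ((1:ℂ)/2) • (Q (X 0) * Q (X 1) + Q (X 1) * Q (X 0)))
    (hcentral : ∀ T : A, T * Q (X 0) = Q (X 0) * T → T * Q (X 1) = Q (X 1) * T →
      ∀ a : A, T * a = a * T) :
    Q ((X 0)^3) = (Q (X 0))^3 := by
  set μ : ℂ := Complex.I / (hbar:ℂ) with hμdef
  have hμ : μ ≠ 0 := div_ne_zero Complex.I_ne_zero (by exact_mod_cast hhbar)
  set q : A := Q (X 0) with hqdef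
  set p : A := Q (X 1) with hpdef
  set K : A := Q ((X 0)^3) with hKdef
  have hcast : ∀ (r : ℝ) (x : A), r • x = (r:ℂ) • x := by
    intro r x
    rw [Algebra.smul_def, Algebra.smul_def, IsScalarTower.algebraMap_apply ℝ ℂ A, Complex.coe_algebraMap]
  -- polynomial identities
  have e1 : pb ((X 0)^3) (X 0) = 0 := by
    simp [pb, pderiv_X, Pi.single_apply]
  have e2 : pb ((X 0)^3) (X 1) = (3:ℝ) • (X 0)^2 := by
    simp [pb, pderiv_X, Pi.single_apply, smul_eq_C_mul, map_ofNat]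
  have e3 : pb (X 0 * X 1) ((X 0)^3) = (-3:ℝ) • (X 0)^3 := by
    simp [pb, pderiv_X, Pi.single_apply, smul_eq_C_mul, map_ofNat]
    ring
  -- K commutes with q
  have hKq : K * q = q * K := by
    have h := hbr ((X 0)^3) (X 0)
    rw [e1, map_zero, ← hKdef, ← hqdef] at h
    have h0 : K * q - q * K = 0 := by
      rcases smul_eq_zero.mp h.symm with h' | h'
      · exact absurd h' hμ
      · exact h'
    exact sub_eq_zero.mp h0
  -- commutator of K with p
  set D : A := μ⁻¹ • ((3:ℝ) • q^2) with hDdef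
  have hKp : K * p = p * K + D := by
    have h := hbr ((X 0)^3) (X 1)
    rw [e2, LinearMap.map_smul, hq2, ← hKdef, ← hpdef] at h
    have h2 : D = K * p - p * K := by
      rw [← Complex.coe_smul] at h; rw [hDdef, hcast, h, inv_smul_smul₀ hμ]
    rw [h2]; abel
  -- final bracket
  have h3 := hbr (X 0 * X 1) ((X 0)^3)
  rw [e3, LinearMap.map_smul, hqp, ← hKdef] at h3
  have key : ((1:ℂ)/2) • (q * p + p * q) * K - K * (((1:ℂ)/2) • (q * p + p * q))
      = ((1:ℂ)/2) • (-(q * D) - D * q) := by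
    have c1 : K * (q * p) = q * p * K + q * D := by
      rw [← mul_assoc, hKq, mul_assoc, hKp, mul_add, ← mul_assoc]
    have c2 : K * (p * q) = p * q * K + D * q := by
      rw [← mul_assoc, hKp, add_mul, mul_assoc, hKq, ← mul_assoc]
    rw [smul_mul_assoc, mul_smul_comm, ← smul_sub]
    congr 1
    rw [mul_add, c1, c2, add_mul]
    abel
  rw [key] at h3
  have hqD : q * D = μ⁻¹ • ((3:ℝ) • q^3) := by
    rw [hDdef, mul_smul_comm, mul_smul_comm, ← pow_succ']
  have hDq : D * q = μ⁻¹ • ((3:ℝ) • q^3) := by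
    rw [hDdef, smul_mul_assoc, smul_mul_assoc, ← pow_succ]
  rw [hqD, hDq] at h3
  have e : -(μ⁻¹ • ((3:ℝ) • q ^ 3)) - μ⁻¹ • ((3:ℝ) • q ^ 3) = ((-6) * μ⁻¹ : ℂ) • q^3 := by
    rw [hcast 3 (q^3), smul_smul, ← neg_smul, ← sub_smul]
    congr 1
    push_cast
    ring
  rw [e, smul_smul, smul_smul] at h3
  have hsc : (μ * ((1:ℂ)/2) * (-6 * μ⁻¹)) = -3 := by
    field_simp
    ring
  rw [hsc, ← Complex.coe_smul] at h3
  have hc3 : ((-3:ℝ):ℂ) = (-3:ℂ) := by norm_num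
  rw [hc3] at h3
  exact smul_right_injective A (by norm_num : (-3:ℂ) ≠ 0) h3
end

section
/- With the Poisson bracket {f,g} = -Σ ε_{ijk} S_i (∂f/∂S_j)(∂g/∂S_k) on polynomials in (S₁,S₂,S₃), one has, modulo the ideal generated by S₁²+S₂²+S₃² - s², the identity 2s²·S₂S₃ = {S₂², {S₁S₂, S₁S₃}} - (3/4){S₁², {S₁², S₂S₃}}. -/
open MvPolynomial

/-- The spin Poisson bracket `{f,g} = -Σ ε_{ijk} S_i (∂f/∂S_j)(∂g/∂S_k)` on
polynomials in `S₁ = X 0`, `S₂ = X 1`, `S₃ = X 2`. -/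
noncomputable def sb (f g : MvPolynomial (Fin 3) ℝ) : MvPolynomial (Fin 3) ℝ :=
  -(X 0 * (pderiv 1 f * pderiv 2 g - pderiv 2 f * pderiv 1 g)
    + X 1 * (pderiv 2 f * pderiv 0 g - pderiv 0 f * pderiv 2 g)
    + X 2 * (pderiv 0 f * pderiv 1 g - pderiv 1 f * pderiv 0 g))

/-- `2s²S₂S₃ = {S₂², {S₁S₂, S₁S₃}} - (3/4){S₁², {S₁², S₂S₃}}`
modulo the ideal generated by `S₁²+S₂²+S₃² - s²`. -/
theorem stmt_12 (s : ℝ) (hs : 0 < s) :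
    sb ((X 1)^2) (sb (X 0 * X 1) (X 0 * X 2))
        - C (3/4 : ℝ) * sb ((X 0)^2) (sb ((X 0)^2) (X 1 * X 2))
        - C (2 * s^2) * (X 1 * X 2)
      ∈ Ideal.span {((X 0)^2 + (X 1)^2 + (X 2)^2 - C (s^2) : MvPolynomial (Fin 3) ℝ)} := by
  rw [Ideal.mem_span_singleton]
  refine ⟨C 2 * X 1 * X 2, ?_⟩
  apply MvPolynomial.funext
  intro x
  simp only [sb, pow_two, pderiv_mul, pderiv_X, Pi.single_apply]
  norm_num [Fin.ext_iff]
  ring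
end
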